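/- Let (W,S) be a Coxeter system with set of reflections T, alternating subgroup W^+, and fix s_0 ∈ S with T_0 = {s_0 t : t ∈ T}. For every w ∈ W^+ the following are equivalent: (i) ℓ_{T_0}(w) is even; (ii) ℓ_T(w) < ℓ_T(s_0 w); (iii) ℓ_T(w) < ℓ_T(w s_0). -/

import Mathlib

attribute [local instance] Classical.propDecidable

/-- The absolute length of `w` with respect to a set `T`: the minimum length of a word
for `w` in the alphabet `T`. -/
noncomputable def absLength {W : Type*} [Group W] (T : Set W) (w : W) : ℕ :=
  sInf {n | ∃ l : List W, (∀ t ∈ l, t ∈ T) ∧ l.prod = w ∧ l.length = n}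

/-- The set of reflections `T` of a Coxeter system. -/
def reflSet {B W : Type*} [Group W] {M : CoxeterMatrix B} (cs : CoxeterSystem M W) :
    Set W := {t | cs.IsReflection t}

/-- The set `T₀ = {s₀ t : t ∈ T}`. -/
def tZero {B W : Type*} [Group W] {M : CoxeterMatrix B} (cs : CoxeterSystem M W)
    (i₀ : B) : Set W := {w | ∃ t, cs.IsReflection t ∧ w = cs.simple i₀ * t}

/-- The alternating subgroup `W⁺` of a Coxeter system: the kernel of the sign character
(which maps every simple reflection to `−1`). -/
def alternating {B W : Type*} [Group W] {M : CoxeterMatrix B} (cs : CoxeterSystem M W) :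
    Subgroup W := cs.lengthParity.ker

section Aux

variable {B W : Type*} [Group W] {M : CoxeterMatrix B}

lemma absLength_le {T : Set W} {w : W} (l : List W) (hl : ∀ t ∈ l, t ∈ T)
    (hp : l.prod = w) : absLength T w ≤ l.length :=
  Nat.sInf_le ⟨l, hl, hp, rfl⟩

lemma absLength_exists {T : Set W} {w : W}
    (h : ∃ l : List W, (∀ t ∈ l, t ∈ T) ∧ l.prod = w) :
    ∃ l : List W, (∀ t ∈ l, t ∈ T) ∧ l.prod = w ∧ l.length = absLength T w := by
  obtain ⟨l, h1, h2⟩ := h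
  exact Nat.sInf_mem (⟨l.length, l, h1, h2, rfl⟩ :
    Set.Nonempty {n | ∃ l : List W, (∀ t ∈ l, t ∈ T) ∧ l.prod = w ∧ l.length = n})

lemma exists_refl_word (cs : CoxeterSystem M W) (w : W) :
    ∃ l : List W, (∀ t ∈ l, cs.IsReflection t) ∧ l.prod = w := by
  obtain ⟨ω, rfl⟩ := cs.wordProd_surjective w
  refine ⟨ω.map cs.simple, ?_, rfl⟩
  intro t ht
  obtain ⟨i, _, rfl⟩ := List.mem_map.mp ht
  exact cs.isReflection_simple i

lemma parity_of_refl_word (cs : CoxeterSystem M W) {l : List W}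
    (hl : ∀ t ∈ l, cs.IsReflection t) :
    cs.lengthParity l.prod = Multiplicative.ofAdd (l.length : ZMod 2) := by
  induction l with
  | nil => simp
  | cons t l ih =>
    have ht : cs.lengthParity t = Multiplicative.ofAdd 1 := by
      obtain ⟨u, i, rfl⟩ := hl t List.mem_cons_self
      simp [map_mul, cs.lengthParity_simple]
    rw [List.prod_cons, map_mul, ht, ih (fun x hx => hl x (List.mem_cons_of_mem _ hx)),
      ← ofAdd_add, List.length_cons]
    push_cast
    ring_nf

lemma even_of_refl_word (cs : CoxeterSystem M W) {l : List W} {w : W}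
    (hl : ∀ t ∈ l, cs.IsReflection t) (hp : l.prod = w)
    (hw : cs.lengthParity w = 1) : Even l.length := by
  rw [← ZMod.natCast_eq_zero_iff_even]
  have h := parity_of_refl_word cs hl
  rw [hp, hw, ← ofAdd_zero] at h
  exact (Multiplicative.ofAdd.injective h).symm

lemma odd_of_refl_word (cs : CoxeterSystem M W) {l : List W} {w : W}
    (hl : ∀ t ∈ l, cs.IsReflection t) (hp : l.prod = w)
    (hw : cs.lengthParity w = Multiplicative.ofAdd 1) : Odd l.length := by
  rw [← ZMod.natCast_eq_one_iff_odd]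
  have h := parity_of_refl_word cs hl
  rw [hp, hw] at h
  exact (Multiplicative.ofAdd.injective h).symm

/-- From a `T₀`-word to a reflection word. -/
lemma t0_to_refl (cs : CoxeterSystem M W) (i₀ : B) :
    ∀ l : List W, (∀ x ∈ l, x ∈ tZero cs i₀) →
      ∃ l' : List W, (∀ x ∈ l', cs.IsReflection x) ∧ l'.length = l.length ∧
        l.prod = (cs.simple i₀) ^ l.length * l'.prod := by
  intro l
  induction l with
  | nil => intro _; exact ⟨[], by simp, by simp, by simp⟩
  | cons x l ih =>
    intro hx
    obtain ⟨t, ht, rfl⟩ := hx x List.mem_cons_self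
    obtain ⟨l', hl', hlen, hprod⟩ := ih (fun y hy => hx y (List.mem_cons_of_mem _ hy))
    set c := (cs.simple i₀) ^ l.length with hc
    refine ⟨(c⁻¹ * t * c) :: l', ?_, by simp [hlen], ?_⟩
    · intro y hy
      rcases List.mem_cons.mp hy with h | h
      · subst h
        simpa using ht.conj c⁻¹
      · exact hl' y h
    · rw [List.prod_cons, List.prod_cons, hprod, List.length_cons, pow_succ']
      simp [mul_assoc, mul_inv_cancel_left, ← hc]
end Aux

section Aux2

variable {B W : Type*} [Group W] {M : CoxeterMatrix B}

/-- From a reflection word to a `T₀`-word. -/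
lemma refl_to_t0 (cs : CoxeterSystem M W) (i₀ : B) :
    ∀ l : List W, (∀ x ∈ l, cs.IsReflection x) →
      ∃ l' : List W, (∀ x ∈ l', x ∈ tZero cs i₀) ∧ l'.length = l.length ∧
        l'.prod = (cs.simple i₀) ^ l.length * l.prod := by
  intro l
  induction l with
  | nil => intro _; exact ⟨[], by simp, by simp, by simp⟩
  | cons t l ih =>
    intro hx
    have ht := hx t List.mem_cons_self
    obtain ⟨l', hl', hlen, hprod⟩ := ih (fun y hy => hx y (List.mem_cons_of_mem _ hy))
    set c := (cs.simple i₀) ^ l.length with hc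
    refine ⟨(cs.simple i₀ * (c * t * c⁻¹)) :: l', ?_, by simp [hlen], ?_⟩
    · intro y hy
      rcases List.mem_cons.mp hy with h | h
      · exact h ▸ ⟨c * t * c⁻¹, ht.conj c, rfl⟩
      · exact hl' y h
    · rw [List.prod_cons, List.prod_cons, hprod, List.length_cons, pow_succ']
      simp [mul_assoc, inv_mul_cancel_left, ← hc]

lemma simple_pow_even (cs : CoxeterSystem M W) (i₀ : B) {n : ℕ} (h : Even n) :
    (cs.simple i₀) ^ n = 1 := by
  obtain ⟨k, rfl⟩ := h
  rw [← two_mul, pow_mul, cs.simple_sq, one_pow]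

lemma simple_pow_odd (cs : CoxeterSystem M W) (i₀ : B) {n : ℕ} (h : Odd n) :
    (cs.simple i₀) ^ n = cs.simple i₀ := by
  obtain ⟨k, rfl⟩ := h
  rw [pow_add, pow_mul, cs.simple_sq, one_pow, one_mul, pow_one]

/-- Conjugation invariance of the absolute reflection length. -/
lemma absLength_refl_conj_le (cs : CoxeterSystem M W) (c u : W) :
    absLength (reflSet cs) (c * u * c⁻¹) ≤ absLength (reflSet cs) u := by
  obtain ⟨l, hl, hp, hlen⟩ := absLength_exists (T := reflSet cs) (exists_refl_word cs u)
  have hcp : (l.map (fun x => c * x * c⁻¹)).prod = c * u * c⁻¹ := by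
    have := map_list_prod (MulAut.conj c).toMonoidHom l
    have e : (⇑(MulAut.conj c) : W → W) = fun x => c * x * c⁻¹ := funext (MulAut.conj_apply c)
    simpa [MulAut.conj_apply, hp, e] using this.symm
  calc absLength (reflSet cs) (c * u * c⁻¹)
      ≤ (l.map (fun x => c * x * c⁻¹)).length := by
        refine absLength_le _ ?_ hcp
        intro t ht
        obtain ⟨x, hx, rfl⟩ := List.mem_map.mp ht
        have hx' : cs.IsReflection x := hl x hx
        exact hx'.conj c
    _ = absLength (reflSet cs) u := by rw [List.length_map, hlen]

lemma absLength_refl_conj (cs : CoxeterSystem M W) (c u : W) :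
    absLength (reflSet cs) (c * u * c⁻¹) = absLength (reflSet cs) u := by
  refine le_antisymm (absLength_refl_conj_le cs c u) ?_
  have h := absLength_refl_conj_le cs c⁻¹ (c * u * c⁻¹)
  have e : c⁻¹ * (c * u * c⁻¹) * c⁻¹⁻¹ = u := by group
  rwa [e] at h

end Aux2

/-!
Statement 17: for every w ∈ W⁺ the following are equivalent:
(i) ℓ_{T₀}(w) is even;  (ii) ℓ_T(w) < ℓ_T(s₀ w);  (iii) ℓ_T(w) < ℓ_T(w s₀).
-/
theorem even_iff_length_lt {B W : Type*} [Group W] {M : CoxeterMatrix B}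
    (cs : CoxeterSystem M W) (i₀ : B) :
    ∀ w ∈ alternating cs,
      (Even (absLength (tZero cs i₀) w) ↔
        absLength (reflSet cs) w < absLength (reflSet cs) (cs.simple i₀ * w)) ∧
      (Even (absLength (tZero cs i₀) w) ↔
        absLength (reflSet cs) w < absLength (reflSet cs) (w * cs.simple i₀)) := by
  intro w hw
  have hw1 : cs.lengthParity w = 1 := MonoidHom.mem_ker.mp hw
  set s₀ := cs.simple i₀ with hs₀
  have hws : cs.lengthParity (s₀ * w) = Multiplicative.ofAdd 1 := by
    rw [map_mul, hw1, mul_one, hs₀, cs.lengthParity_simple]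
  -- parity of absolute lengths
  obtain ⟨lw, hlw, hlwp, hlwlen⟩ := absLength_exists (T := reflSet cs) (exists_refl_word cs w)
  obtain ⟨ls, hls, hlsp, hlslen⟩ := absLength_exists (T := reflSet cs) (exists_refl_word cs (s₀ * w))
  have heven : Even (absLength (reflSet cs) w) :=
    hlwlen ▸ even_of_refl_word cs hlw hlwp hw1
  have hodd : Odd (absLength (reflSet cs) (s₀ * w)) :=
    hlslen ▸ odd_of_refl_word cs hls hlsp hws
  -- ℓ_{T₀}(w) ≤ ℓ_T(w)
  have le1 : absLength (tZero cs i₀) w ≤ absLength (reflSet cs) w := by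
    obtain ⟨l', hl', hlen, hprod⟩ := refl_to_t0 cs i₀ lw hlw
    have : l'.prod = w := by
      rw [hprod, simple_pow_even cs i₀ (hlwlen ▸ heven), one_mul, hlwp]
    calc absLength (tZero cs i₀) w ≤ l'.length := absLength_le _ hl' this
      _ = absLength (reflSet cs) w := by rw [hlen, hlwlen]
  -- ℓ_{T₀}(w) ≤ ℓ_T(s₀ w)
  have le2 : absLength (tZero cs i₀) w ≤ absLength (reflSet cs) (s₀ * w) := by
    obtain ⟨l', hl', hlen, hprod⟩ := refl_to_t0 cs i₀ ls hls
    have : l'.prod = w := by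
      rw [hprod, simple_pow_odd cs i₀ (hlslen ▸ hodd), hlsp, ← mul_assoc, hs₀,
        cs.simple_mul_simple_self, one_mul]
    calc absLength (tZero cs i₀) w ≤ l'.length := absLength_le _ hl' this
      _ = absLength (reflSet cs) (s₀ * w) := by rw [hlen, hlslen]
  -- a minimal T₀ word exists
  obtain ⟨l0, hl0, hl0p, hl0len⟩ := absLength_exists (w := w) (T := tZero cs i₀) (by
    obtain ⟨l', hl', hlen, hprod⟩ := refl_to_t0 cs i₀ ls hls
    exact ⟨l', hl', by
      rw [hprod, simple_pow_odd cs i₀ (hlslen ▸ hodd), hlsp, ← mul_assoc, hs₀,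
        cs.simple_mul_simple_self, one_mul]⟩)
  obtain ⟨l', hl', hlen, hprod⟩ := t0_to_refl cs i₀ l0 hl0
  have hne : absLength (reflSet cs) w ≠ absLength (reflSet cs) (s₀ * w) := by
    intro h
    exact (Nat.not_even_iff_odd.mpr hodd) (h ▸ heven)
  have key : Even (absLength (tZero cs i₀) w) ↔
      absLength (reflSet cs) w < absLength (reflSet cs) (s₀ * w) := by
    constructor
    · intro he
      -- then ℓ_T(w) ≤ ℓ_{T₀}(w) ≤ ℓ_T(s₀ w), and they differ
      have hTw : absLength (reflSet cs) w ≤ absLength (tZero cs i₀) w := by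
        have hprod' : l'.prod = w := by
          have : (s₀ : W) ^ l0.length = 1 :=
            simple_pow_even cs i₀ (hl0len ▸ he)
          rw [hl0p, this, one_mul] at hprod
          exact hprod.symm
        calc absLength (reflSet cs) w ≤ l'.length := absLength_le _ hl' hprod'
          _ = absLength (tZero cs i₀) w := by rw [hlen, hl0len]
      exact lt_of_le_of_ne (le_trans hTw le2) hne
    · intro hlt
      by_contra hoddm
      have hom : Odd (absLength (tZero cs i₀) w) := Nat.not_even_iff_odd.mp hoddm
      have hprod' : l'.prod = s₀ * w := by
        have h1 : (s₀ : W) ^ l0.length = s₀ :=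
          simple_pow_odd cs i₀ (hl0len ▸ hom)
        rw [hl0p, h1] at hprod
        rw [hprod, ← mul_assoc, hs₀, cs.simple_mul_simple_self, one_mul]
      have : absLength (reflSet cs) (s₀ * w) ≤ absLength (tZero cs i₀) w := by
        calc absLength (reflSet cs) (s₀ * w) ≤ l'.length := absLength_le _ hl' hprod'
          _ = absLength (tZero cs i₀) w := by rw [hlen, hl0len]
      omega
  have hconj : absLength (reflSet cs) (w * s₀) = absLength (reflSet cs) (s₀ * w) := by
    have e : s₀ * (w * s₀) * s₀⁻¹ = s₀ * w := by group
    rw [← e, absLength_refl_conj cs s₀ (w * s₀)]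
  exact ⟨key, key.trans (by rw [hconj])⟩
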